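/- For an [m,k]-linear code C, the generalized Hamming weights are strictly increasing: δ₁(C) < δ₂(C) < ⋯ < δ_k(C). -/

import Mathlib

open Set

/-- The support of a subcode: the coordinates where some codeword is nonzero. -/
noncomputable def codeSupport {ι F : Type*} [Field F] (D : Submodule F (ι → F)) : Set ι :=
  {i | ∃ v ∈ D, v i ≠ 0}

/-- The `r`-th generalized Hamming weight of a linear code `C`. -/
noncomputable def GHW {ι F : Type*} [Field F] (C : Submodule F (ι → F)) (r : ℕ) : ℕ :=
  sInf {n | ∃ D : Submodule F (ι → F), D ≤ C ∧ Module.finrank F D = r ∧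
    (codeSupport D).ncard = n}

set_option maxHeartbeats 800000 in
set_option synthInstance.maxHeartbeats 200000 in
theorem stmt3 {m k : ℕ} {F : Type*} [Field F] [Fintype F]
    (C : Submodule F (Fin m → F)) (hk : Module.finrank F C = k)
    (r : ℕ) (hr : 1 ≤ r) (hrk : r < k) :
    GHW C r < GHW C (r + 1) := by
  classical
  -- nonemptiness of the defining set for r+1
  have hle : r + 1 ≤ Module.finrank F C := by omega
  obtain ⟨f, hf⟩ := exists_linearIndependent_of_le_finrank (R := F) (M := C) hle
  have hf' : LinearIndependent F (fun j : Fin (r+1) => (f j : Fin m → F)) :=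
    hf.map' C.subtype (Submodule.ker_subtype C)
  set D0 : Submodule F (Fin m → F) := Submodule.span F (Set.range fun j => (f j : Fin m → F))
  have hD0C : D0 ≤ C := by
    rw [Submodule.span_le]
    rintro _ ⟨j, rfl⟩; exact (f j).2
  have hD0rank : Module.finrank F D0 = r + 1 := by
    rw [finrank_span_eq_card hf', Fintype.card_fin]
  have hne : {n | ∃ D : Submodule F (Fin m → F), D ≤ C ∧ Module.finrank F D = r + 1 ∧
      (codeSupport D).ncard = n}.Nonempty := ⟨_, D0, hD0C, hD0rank, rfl⟩
  -- pick a minimizer D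
  obtain ⟨D, hDC, hDrank, hDcard⟩ := Nat.sInf_mem hne
  -- D has a nonzero vector, hence nonempty support
  have hDne : ∃ v ∈ D, v ≠ 0 := by
    by_contra h
    push_neg at h
    have : D = ⊥ := by
      ext v; simp only [Submodule.mem_bot]
      exact ⟨fun hv => h v hv, fun hv => hv ▸ D.zero_mem⟩
    rw [this, finrank_bot] at hDrank
    omega
  obtain ⟨v, hvD, hv⟩ := hDne
  obtain ⟨i, hvi⟩ : ∃ i, v i ≠ 0 := by
    by_contra h; push_neg at h; exact hv (funext h)
  have hiS : i ∈ codeSupport D := ⟨v, hvD, hvi⟩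
  -- the subcode vanishing at i
  set π : (Fin m → F) →ₗ[F] F := LinearMap.proj i
  set D' : Submodule F (Fin m → F) := D ⊓ LinearMap.ker π
  have hD'C : D' ≤ C := le_trans inf_le_left hDC
  -- rank of D'
  have hker : LinearMap.ker (π.comp D.subtype) = (D').comap D.subtype := by
    rw [LinearMap.ker_comp]
    ext x
    simp [D', x.2]
  have hrange : LinearMap.range (π.comp D.subtype) = ⊤ := by
    rw [eq_top_iff]
    intro c _
    refine ⟨(c * (v i)⁻¹) • ⟨v, hvD⟩, ?_⟩
    show ((c * (v i)⁻¹) • v) i = c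
    rw [Pi.smul_apply, smul_eq_mul]
    field_simp
  have hD'rank : Module.finrank F D' = r := by
    have h1 := LinearMap.finrank_range_add_finrank_ker (π.comp D.subtype)
    rw [hrange, hker, finrank_top] at h1
    have h2 : Module.finrank F ((D').comap D.subtype) = Module.finrank F D' :=
      (Submodule.comapSubtypeEquivOfLe (inf_le_left : D' ≤ D)).finrank_eq
    have h3 : Module.finrank F F = 1 := Module.finrank_self F
    omega
  -- support of D' shrinks
  have hsub : codeSupport D' ⊆ codeSupport D \ {i} := by
    rintro j ⟨w, hwD', hwj⟩
    refine ⟨⟨w, hwD'.1, hwj⟩, ?_⟩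
    intro hj
    rw [Set.mem_singleton_iff] at hj
    subst hj
    exact hwj hwD'.2
  have hfin : (codeSupport D).Finite := Set.toFinite _
  have hlt : (codeSupport D').ncard < (codeSupport D).ncard :=
    lt_of_le_of_lt (Set.ncard_le_ncard hsub hfin.diff)
      (Set.ncard_diff_singleton_lt_of_mem hiS hfin)
  have hGHWr : GHW C r ≤ (codeSupport D').ncard :=
    Nat.sInf_le ⟨D', hD'C, hD'rank, rfl⟩
  calc GHW C r ≤ (codeSupport D').ncard := hGHWr
    _ < (codeSupport D).ncard := hlt
    _ = GHW C (r + 1) := hDcard
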